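/- arXiv:2012.10242 — 6 statements merged into one kernel-verified Lean document; each statement's English description precedes it below -/
import Mathlib

section
/- Let G = SijTji be a Gauss word where S and T contain neither i nor j. Every z₀ ∈ Sub^(0)(G) decomposes uniquely as z₀ = σ(z₀)τ(z₀) with σ(z₀) a sub-word of S and τ(z₀) a sub-word of T. Define z₂(z₀) = σ(z₀)ij τ(z₀)ji, z₁(z₀) = σ(z₀)i τ(z₀)i, z₁'(z₀) = σ(z₀)j τ(z₀)j. Then Sub^(1)(G) ∪ Sub^(2)(G) is the disjoint union of the images of z₁, z₁', and z₂, each of which is injective on Sub^(0)(G). -/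
open scoped Classical

/-- A Gauss word: every letter occurring in it occurs exactly twice. -/
def IsGauss (w : List ℕ) : Prop := ∀ a ∈ w, w.count a = 2

/-- Isomorphism of Gauss words (as lists): a relabeling of letters together with a
cyclic rotation and possibly a reflection. -/
def WordIso (v w : List ℕ) : Prop :=
  ∃ f : ℕ → ℕ, Set.InjOn f {a | a ∈ v} ∧
    ∃ t : ℕ, w = (v.map f).rotate t ∨ w = ((v.map f).reverse).rotate t

/-- `z` is a sub-Gauss word of `w`: obtained by deleting all occurrences of some
set of letters (i.e. keeping the letters in some finite set `A`). -/
def IsSubword (z w : List ℕ) : Prop :=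
  ∃ A : Finset ℕ, z = w.filter (fun a => decide (a ∈ A))

/-- `subCount x G` = number of sub-Gauss words of `G` whose isomorphism class is
that of `x` (sub-Gauss words being parametrized by the subset of retained letters). -/
noncomputable def subCount (x G : List ℕ) : ℕ :=
  (G.toFinset.powerset.filter
    (fun A => WordIso (G.filter (fun a => decide (a ∈ A))) x)).card

/-- `SubW G D m` : the set of sub-Gauss words of `G` containing exactly `m` of the
distinguished letters in `D`. -/
def SubW (G : List ℕ) (D : Finset ℕ) (m : ℕ) : Set (List ℕ) :=
  {z | ∃ A : Finset ℕ, A ⊆ G.toFinset ∧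
    z = G.filter (fun a => decide (a ∈ A)) ∧ (A ∩ D).card = m}

/-- A chord is isolated iff the two occurrences of its letter are cyclically adjacent. -/
def HasIsolatedChord (w : List ℕ) : Prop :=
  ∃ a t, a ∈ w ∧ (w.rotate t).take 2 = [a, a]

/-- The chord diagram of `g` is a product of two nonempty chord diagrams. -/
def IsProductDiagram (g : List ℕ) : Prop :=
  ∃ v w : List ℕ, v ≠ [] ∧ w ≠ [] ∧ IsGauss v ∧ IsGauss w ∧
    (∀ a ∈ v, a ∉ w) ∧ WordIso g (v ++ w)

/-- The coefficient of the chord diagram (class) of `y` in a formal ℤ-linear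
combination of chord diagrams, given as a list of (coefficient, Gauss word) pairs. -/
noncomputable def coef (y : List ℕ) (r : List (ℤ × List ℕ)) : ℤ :=
  (r.map (fun p => p.1 * (if WordIso p.2 y then 1 else 0))).sum

namespace SubDecompAux

lemma count_one_one {S U : List ℕ} (hSU : IsGauss (S ++ U)) {a : ℕ}
    (haS : a ∈ S) (haU : a ∈ U) : S.count a = 1 ∧ U.count a = 1 := by
  have h2 := hSU a (List.mem_append.mpr (Or.inl haS))
  rw [List.count_append] at h2
  have h1 : 0 < S.count a := List.count_pos_iff.mpr haS
  have h3 : 0 < U.count a := List.count_pos_iff.mpr haU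
  omega

lemma unique_decomp {S U : List ℕ} (hSU : IsGauss (S ++ U)) (A B C : Finset ℕ)
    (h : S.filter (fun a => decide (a ∈ B)) ++ U.filter (fun a => decide (a ∈ C))
       = S.filter (fun a => decide (a ∈ A)) ++ U.filter (fun a => decide (a ∈ A))) :
    S.filter (fun a => decide (a ∈ B)) = S.filter (fun a => decide (a ∈ A)) ∧
    U.filter (fun a => decide (a ∈ C)) = U.filter (fun a => decide (a ∈ A)) := by
  set s := S.filter (fun a => decide (a ∈ B)) with hs
  set u := U.filter (fun a => decide (a ∈ C)) with hu
  set σ := S.filter (fun a => decide (a ∈ A)) with hσ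
  set τ := U.filter (fun a => decide (a ∈ A)) with hτ
  have hlen : s.length = σ.length := by
    rcases lt_trichotomy s.length σ.length with hl | hl | hl
    · exfalso
      obtain ⟨m, hm⟩ := List.prefix_of_prefix_length_le ⟨u, h⟩ ⟨τ, rfl⟩ hl.le
      have hmne : m ≠ [] := by
        intro hme; rw [hme, List.append_nil] at hm; rw [hm] at hl; exact lt_irrefl _ hl
      set a := m.head hmne with ha
      have ham : a ∈ m := List.head_mem hmne
      have haσ : a ∈ σ := by rw [← hm]; exact List.mem_append_right _ ham
      have haS : a ∈ S := (List.mem_filter.mp haσ).1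
      have haA : a ∈ A := by simpa using (List.mem_filter.mp haσ).2
      have huu : u = m ++ τ := by
        apply List.append_cancel_left (as := s)
        rw [h, ← hm, List.append_assoc]
      have hau : a ∈ u := by rw [huu]; exact List.mem_append_left _ ham
      have haU : a ∈ U := (List.mem_filter.mp hau).1
      obtain ⟨cS, cU⟩ := count_one_one hSU haS haU
      have hcτ : τ.count a = 1 := by
        rw [hτ, List.count_filter (by simpa using haA)]; exact cU
      have hcu : u.count a ≤ 1 := by
        have h9 : u.count a ≤ U.count a := by
          rw [hu]; exact (List.filter_sublist (l := U)).count_le a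
        omega
      have hcm : 0 < m.count a := List.count_pos_iff.mpr ham
      rw [huu, List.count_append] at hcu
      omega
    · exact hl
    · exfalso
      obtain ⟨m, hm⟩ := List.prefix_of_prefix_length_le ⟨τ, h.symm⟩ ⟨u, rfl⟩ hl.le
      have hmne : m ≠ [] := by
        intro hme; rw [hme, List.append_nil] at hm; rw [hm] at hl; exact lt_irrefl _ hl
      set a := m.head hmne with ha
      have ham : a ∈ m := List.head_mem hmne
      have has : a ∈ s := by rw [← hm]; exact List.mem_append_right _ ham
      have haS : a ∈ S := (List.mem_filter.mp has).1
      have hττ : τ = m ++ u := by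
        apply List.append_cancel_left (as := σ)
        rw [← h, ← hm, List.append_assoc]
      have haτ : a ∈ τ := by rw [hττ]; exact List.mem_append_left _ ham
      have haU : a ∈ U := (List.mem_filter.mp haτ).1
      have haA : a ∈ A := by simpa using (List.mem_filter.mp haτ).2
      obtain ⟨cS, cU⟩ := count_one_one hSU haS haU
      have hcσ : σ.count a = 1 := by
        rw [hσ, List.count_filter (by simpa using haA)]; exact cS
      have hcs : s.count a ≤ 1 := by
        have h9 : s.count a ≤ S.count a := by
          rw [hs]; exact (List.filter_sublist (l := S)).count_le a
        omega
      have hcm : 0 < m.count a := List.count_pos_iff.mpr ham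
      rw [← hm, List.count_append] at hcs
      omega
  exact List.append_inj h hlen

lemma filter_mem_congr {S U : List ℕ} (A' : Finset ℕ) (L : List ℕ)
    (hL : ∀ a ∈ L, a ∈ S ∨ a ∈ U) :
    L.filter (fun a => decide (a ∈ S.filter (fun b => decide (b ∈ A')) ++
        U.filter (fun b => decide (b ∈ A')))) = L.filter (fun a => decide (a ∈ A')) := by
  apply List.filter_congr
  intro a ha
  simp only [decide_eq_decide, List.mem_append, List.mem_filter, decide_eq_true_eq]
  have := hL a ha
  tauto

lemma append_cons_inj {i : ℕ} : ∀ {xs ys : List ℕ} {rs ts : List ℕ}, i ∉ xs → i ∉ ys →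
    xs ++ i :: rs = ys ++ i :: ts → xs = ys ∧ rs = ts := by
  intro xs
  induction xs with
  | nil =>
    intro ys rs ts _ hy h
    cases ys with
    | nil => simpa using h
    | cons b ys =>
      simp only [List.nil_append, List.cons_append, List.cons.injEq] at h
      exact absurd (h.1 ▸ List.mem_cons_self (a := b) (l := ys)) (h.1 ▸ hy)
  | cons a xs ih =>
    intro ys rs ts hx hy h
    cases ys with
    | nil =>
      simp only [List.nil_append, List.cons_append, List.cons.injEq] at h
      exact absurd (h.1 ▸ List.mem_cons_self (a := a) (l := xs)) (h.1 ▸ hx)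
    | cons b ys =>
      simp only [List.cons_append, List.cons.injEq] at h
      obtain ⟨hab, h2⟩ := h
      have := ih (fun hm => hx (List.mem_cons_of_mem _ hm))
        (fun hm => hy (List.mem_cons_of_mem _ hm)) h2
      exact ⟨by rw [hab, this.1], this.2⟩

end SubDecompAux

/-- for `G = SijTji` (here the second word is called `U`), every
`z₀ ∈ Sub^(0)(G)` decomposes uniquely as `σ(z₀)τ(z₀)` with `σ(z₀)` a sub-word of `S`
and `τ(z₀)` a sub-word of `U`; and `Sub^(1)(G) ∪ Sub^(2)(G)` is the disjoint union of
the images of the maps `z₁ : z₀ ↦ σ(z₀) i τ(z₀) i`, `z₁' : z₀ ↦ σ(z₀) j τ(z₀) j` and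
`z₂ : z₀ ↦ σ(z₀) ij τ(z₀) ji`, each of which is injective on `Sub^(0)(G)`. -/
theorem sub_decomposition_strongRII (S U : List ℕ) (hSU : IsGauss (S ++ U))
    (i j : ℕ) (hi : i ∉ S ++ U) (hj : j ∉ S ++ U) (hij : i ≠ j) :
    (∀ z₀ ∈ SubW (S ++ [i, j] ++ U ++ [j, i]) {i, j} 0,
        ∃! p : List ℕ × List ℕ,
          IsSubword p.1 S ∧ IsSubword p.2 U ∧ z₀ = p.1 ++ p.2) ∧
    (SubW (S ++ [i, j] ++ U ++ [j, i]) {i, j} 1 ∪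
        SubW (S ++ [i, j] ++ U ++ [j, i]) {i, j} 2 =
      (fun z => S.filter (fun a => decide (a ∈ z)) ++ [i] ++
          U.filter (fun a => decide (a ∈ z)) ++ [i]) ''
            SubW (S ++ [i, j] ++ U ++ [j, i]) {i, j} 0 ∪
      (fun z => S.filter (fun a => decide (a ∈ z)) ++ [j] ++
          U.filter (fun a => decide (a ∈ z)) ++ [j]) ''
            SubW (S ++ [i, j] ++ U ++ [j, i]) {i, j} 0 ∪
      (fun z => S.filter (fun a => decide (a ∈ z)) ++ [i, j] ++
          U.filter (fun a => decide (a ∈ z)) ++ [j, i]) ''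
            SubW (S ++ [i, j] ++ U ++ [j, i]) {i, j} 0) ∧
    (Disjoint
      ((fun z => S.filter (fun a => decide (a ∈ z)) ++ [i] ++
          U.filter (fun a => decide (a ∈ z)) ++ [i]) ''
            SubW (S ++ [i, j] ++ U ++ [j, i]) {i, j} 0)
      ((fun z => S.filter (fun a => decide (a ∈ z)) ++ [j] ++
          U.filter (fun a => decide (a ∈ z)) ++ [j]) ''
            SubW (S ++ [i, j] ++ U ++ [j, i]) {i, j} 0)) ∧
    (Disjoint
      ((fun z => S.filter (fun a => decide (a ∈ z)) ++ [i] ++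
          U.filter (fun a => decide (a ∈ z)) ++ [i]) ''
            SubW (S ++ [i, j] ++ U ++ [j, i]) {i, j} 0)
      ((fun z => S.filter (fun a => decide (a ∈ z)) ++ [i, j] ++
          U.filter (fun a => decide (a ∈ z)) ++ [j, i]) ''
            SubW (S ++ [i, j] ++ U ++ [j, i]) {i, j} 0)) ∧
    (Disjoint
      ((fun z => S.filter (fun a => decide (a ∈ z)) ++ [j] ++
          U.filter (fun a => decide (a ∈ z)) ++ [j]) ''
            SubW (S ++ [i, j] ++ U ++ [j, i]) {i, j} 0)
      ((fun z => S.filter (fun a => decide (a ∈ z)) ++ [i, j] ++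
          U.filter (fun a => decide (a ∈ z)) ++ [j, i]) ''
            SubW (S ++ [i, j] ++ U ++ [j, i]) {i, j} 0)) ∧
    (Set.InjOn (fun z => S.filter (fun a => decide (a ∈ z)) ++ [i] ++
          U.filter (fun a => decide (a ∈ z)) ++ [i])
        (SubW (S ++ [i, j] ++ U ++ [j, i]) {i, j} 0)) ∧
    (Set.InjOn (fun z => S.filter (fun a => decide (a ∈ z)) ++ [j] ++
          U.filter (fun a => decide (a ∈ z)) ++ [j])
        (SubW (S ++ [i, j] ++ U ++ [j, i]) {i, j} 0)) ∧
    (Set.InjOn (fun z => S.filter (fun a => decide (a ∈ z)) ++ [i, j] ++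
          U.filter (fun a => decide (a ∈ z)) ++ [j, i])
        (SubW (S ++ [i, j] ++ U ++ [j, i]) {i, j} 0)) := by
  have hiS : i ∉ S := fun h => hi (List.mem_append.mpr (Or.inl h))
  have hiU : i ∉ U := fun h => hi (List.mem_append.mpr (Or.inr h))
  have hjS : j ∉ S := fun h => hj (List.mem_append.mpr (Or.inl h))
  have hjU : j ∉ U := fun h => hj (List.mem_append.mpr (Or.inr h))
  have hG0 : ∀ A : Finset ℕ, i ∉ A → j ∉ A →
      (S ++ [i, j] ++ U ++ [j, i]).filter (fun a => decide (a ∈ A)) =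
      S.filter (fun a => decide (a ∈ A)) ++ U.filter (fun a => decide (a ∈ A)) := by
    intro A hiA hjA
    simp [List.filter_append, hiA, hjA]
  have hG1 : ∀ A : Finset ℕ, i ∈ A → j ∉ A →
      (S ++ [i, j] ++ U ++ [j, i]).filter (fun a => decide (a ∈ A)) =
      S.filter (fun a => decide (a ∈ A)) ++ [i] ++ U.filter (fun a => decide (a ∈ A)) ++ [i] := by
    intro A hiA hjA
    simp [List.filter_append, hiA, hjA]
  have hG2 : ∀ A : Finset ℕ, j ∈ A → i ∉ A →
      (S ++ [i, j] ++ U ++ [j, i]).filter (fun a => decide (a ∈ A)) =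
      S.filter (fun a => decide (a ∈ A)) ++ [j] ++ U.filter (fun a => decide (a ∈ A)) ++ [j] := by
    intro A hjA hiA
    simp [List.filter_append, hiA, hjA]
  have hG3 : ∀ A : Finset ℕ, i ∈ A → j ∈ A →
      (S ++ [i, j] ++ U ++ [j, i]).filter (fun a => decide (a ∈ A)) =
      S.filter (fun a => decide (a ∈ A)) ++ [i, j] ++ U.filter (fun a => decide (a ∈ A)) ++ [j, i] := by
    intro A hiA hjA
    simp [List.filter_append, hiA, hjA]
  have hsub0 : ∀ z₀, z₀ ∈ SubW (S ++ [i, j] ++ U ++ [j, i]) {i, j} 0 ↔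
      ∃ A' : Finset ℕ, A' ⊆ (S ++ [i, j] ++ U ++ [j, i]).toFinset ∧ i ∉ A' ∧ j ∉ A' ∧
        z₀ = S.filter (fun a => decide (a ∈ A')) ++ U.filter (fun a => decide (a ∈ A')) := by
    intro z₀
    constructor
    · rintro ⟨A, hA, rfl, hcard⟩
      rw [Finset.card_eq_zero] at hcard
      have hiA : i ∉ A := fun hm => by
        have : i ∈ A ∩ ({i, j} : Finset ℕ) := Finset.mem_inter.mpr ⟨hm, by simp⟩
        simp [hcard] at this
      have hjA : j ∉ A := fun hm => by
        have : j ∈ A ∩ ({i, j} : Finset ℕ) := Finset.mem_inter.mpr ⟨hm, by simp⟩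
        simp [hcard] at this
      exact ⟨A, hA, hiA, hjA, hG0 A hiA hjA⟩
    · rintro ⟨A', hA', hiA, hjA, rfl⟩
      refine ⟨A', hA', (hG0 A' hiA hjA).symm, ?_⟩
      rw [Finset.card_eq_zero]
      ext x
      simp only [Finset.mem_inter, Finset.mem_insert, Finset.mem_singleton,
        Finset.notMem_empty, iff_false, not_and]
      rintro hx (rfl | rfl)
      · exact hiA hx
      · exact hjA hx
  have hfmS : ∀ A' : Finset ℕ,
      S.filter (fun a => decide (a ∈ S.filter (fun b => decide (b ∈ A')) ++
        U.filter (fun b => decide (b ∈ A')))) = S.filter (fun a => decide (a ∈ A')) :=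
    fun A' => SubDecompAux.filter_mem_congr A' S (fun a ha => Or.inl ha)
  have hfmU : ∀ A' : Finset ℕ,
      U.filter (fun a => decide (a ∈ S.filter (fun b => decide (b ∈ A')) ++
        U.filter (fun b => decide (b ∈ A')))) = U.filter (fun a => decide (a ∈ A')) :=
    fun A' => SubDecompAux.filter_mem_congr A' U (fun a ha => Or.inr ha)
  have hnotiSf : ∀ A' : Finset ℕ, i ∉ S.filter (fun a => decide (a ∈ A')) :=
    fun A' hm => hiS (List.mem_filter.mp hm).1
  have hnotjSf : ∀ A' : Finset ℕ, j ∉ S.filter (fun a => decide (a ∈ A')) :=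
    fun A' hm => hjS (List.mem_filter.mp hm).1
  refine ⟨?_, ?_, ?_, ?_, ?_, ?_, ?_, ?_⟩
  · -- unique decomposition
    intro z₀ hz₀
    obtain ⟨A', hA', hiA, hjA, rfl⟩ := (hsub0 z₀).mp hz₀
    refine ⟨(S.filter (fun a => decide (a ∈ A')), U.filter (fun a => decide (a ∈ A'))),
      ⟨⟨A', rfl⟩, ⟨A', rfl⟩, rfl⟩, ?_⟩
    rintro ⟨p₁, p₂⟩ ⟨⟨B, rfl⟩, ⟨C, rfl⟩, heq⟩
    obtain ⟨h1, h2⟩ := SubDecompAux.unique_decomp hSU A' B C heq.symm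
    simp only [Prod.mk.injEq]
    exact ⟨h1, h2⟩
  · -- set equality
    ext z
    constructor
    · rintro (⟨A, hA, rfl, hcard⟩ | ⟨A, hA, rfl, hcard⟩)
      · obtain ⟨x, hx⟩ := Finset.card_eq_one.mp hcard
        have hxA : x ∈ A ∧ (x = i ∨ x = j) := by
          have : x ∈ A ∩ ({i, j} : Finset ℕ) := hx ▸ Finset.mem_singleton_self x
          simpa using this
        set A' := A \ {i, j} with hA'def
        have hsubA' : A' ⊆ (S ++ [i, j] ++ U ++ [j, i]).toFinset :=
          (Finset.sdiff_subset).trans hA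
        have hiA' : i ∉ A' := by simp [hA'def]
        have hjA' : j ∉ A' := by simp [hA'def]
        have hz₀mem : S.filter (fun a => decide (a ∈ A')) ++ U.filter (fun a => decide (a ∈ A'))
            ∈ SubW (S ++ [i, j] ++ U ++ [j, i]) {i, j} 0 :=
          (hsub0 _).mpr ⟨A', hsubA', hiA', hjA', rfl⟩
        have hSA : S.filter (fun a => decide (a ∈ A)) = S.filter (fun a => decide (a ∈ A')) := by
          apply List.filter_congr
          intro a ha
          have h1 : a ≠ i := fun h => hiS (h ▸ ha)
          have h2 : a ≠ j := fun h => hjS (h ▸ ha)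
          simp only [decide_eq_decide, hA'def, Finset.mem_sdiff, Finset.mem_insert,
            Finset.mem_singleton]
          tauto
        have hUA : U.filter (fun a => decide (a ∈ A)) = U.filter (fun a => decide (a ∈ A')) := by
          apply List.filter_congr
          intro a ha
          have h1 : a ≠ i := fun h => hiU (h ▸ ha)
          have h2 : a ≠ j := fun h => hjU (h ▸ ha)
          simp only [decide_eq_decide, hA'def, Finset.mem_sdiff, Finset.mem_insert,
            Finset.mem_singleton]
          tauto
        obtain hxe | hxe := hxA.2 <;> replace hxe := hxe.symm <;> subst hxe
        · -- x = i
          have hiA : i ∈ A := hxA.1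
          have hjA : j ∉ A := fun hm => by
            have : j ∈ A ∩ ({i, j} : Finset ℕ) := Finset.mem_inter.mpr ⟨hm, by simp⟩
            rw [hx] at this
            exact hij (Finset.mem_singleton.mp this).symm
          refine Or.inl (Or.inl ⟨_, hz₀mem, ?_⟩)
          show S.filter _ ++ [i] ++ U.filter _ ++ [i] = _
          rw [hfmS A', hfmU A', hG1 A hiA hjA, hSA, hUA]
        · -- x = j
          have hjA : j ∈ A := hxA.1
          have hiA : i ∉ A := fun hm => by
            have : i ∈ A ∩ ({i, j} : Finset ℕ) := Finset.mem_inter.mpr ⟨hm, by simp⟩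
            rw [hx] at this
            exact hij (Finset.mem_singleton.mp this)
          refine Or.inl (Or.inr ⟨_, hz₀mem, ?_⟩)
          show S.filter _ ++ [j] ++ U.filter _ ++ [j] = _
          rw [hfmS A', hfmU A', hG2 A hjA hiA, hSA, hUA]
      · have hsub : A ∩ ({i, j} : Finset ℕ) ⊆ {i, j} := Finset.inter_subset_right
        have hcard2 : ({i, j} : Finset ℕ).card = 2 := by
          rw [Finset.card_insert_of_notMem (by simpa using hij), Finset.card_singleton]
        have hinter : A ∩ ({i, j} : Finset ℕ) = {i, j} :=
          Finset.eq_of_subset_of_card_le hsub (by omega)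
        have hiA : i ∈ A := by
          have : i ∈ A ∩ ({i, j} : Finset ℕ) := by rw [hinter]; simp
          exact (Finset.mem_inter.mp this).1
        have hjA : j ∈ A := by
          have : j ∈ A ∩ ({i, j} : Finset ℕ) := by rw [hinter]; simp
          exact (Finset.mem_inter.mp this).1
        set A' := A \ {i, j} with hA'def
        have hsubA' : A' ⊆ (S ++ [i, j] ++ U ++ [j, i]).toFinset :=
          (Finset.sdiff_subset).trans hA
        have hiA' : i ∉ A' := by simp [hA'def]
        have hjA' : j ∉ A' := by simp [hA'def]
        have hz₀mem : S.filter (fun a => decide (a ∈ A')) ++ U.filter (fun a => decide (a ∈ A'))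
            ∈ SubW (S ++ [i, j] ++ U ++ [j, i]) {i, j} 0 :=
          (hsub0 _).mpr ⟨A', hsubA', hiA', hjA', rfl⟩
        have hSA : S.filter (fun a => decide (a ∈ A)) = S.filter (fun a => decide (a ∈ A')) := by
          apply List.filter_congr
          intro a ha
          have h1 : a ≠ i := fun h => hiS (h ▸ ha)
          have h2 : a ≠ j := fun h => hjS (h ▸ ha)
          simp only [decide_eq_decide, hA'def, Finset.mem_sdiff, Finset.mem_insert,
            Finset.mem_singleton]
          tauto
        have hUA : U.filter (fun a => decide (a ∈ A)) = U.filter (fun a => decide (a ∈ A')) := by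
          apply List.filter_congr
          intro a ha
          have h1 : a ≠ i := fun h => hiU (h ▸ ha)
          have h2 : a ≠ j := fun h => hjU (h ▸ ha)
          simp only [decide_eq_decide, hA'def, Finset.mem_sdiff, Finset.mem_insert,
            Finset.mem_singleton]
          tauto
        refine Or.inr ⟨_, hz₀mem, ?_⟩
        show S.filter _ ++ [i, j] ++ U.filter _ ++ [j, i] = _
        rw [hfmS A', hfmU A', hG3 A hiA hjA, hSA, hUA]
    · rintro ((⟨z₀, hz₀, rfl⟩ | ⟨z₀, hz₀, rfl⟩) | ⟨z₀, hz₀, rfl⟩)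
      · obtain ⟨A', hA', hiA, hjA, rfl⟩ := (hsub0 z₀).mp hz₀
        refine Or.inl ⟨insert i A', ?_, ?_, ?_⟩
        · rw [Finset.insert_subset_iff]
          exact ⟨by simp, hA'⟩
        · dsimp only
          rw [hG1 (insert i A') (Finset.mem_insert_self i A')
            (by simp [hij.symm, hjA]), hfmS A', hfmU A']
          have e1 : S.filter (fun a => decide (a ∈ insert i A')) =
              S.filter (fun a => decide (a ∈ A')) := by
            apply List.filter_congr
            intro a ha
            have h1 : a ≠ i := fun h => hiS (h ▸ ha)
            simp only [decide_eq_decide, Finset.mem_insert]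
            tauto
          have e2 : U.filter (fun a => decide (a ∈ insert i A')) =
              U.filter (fun a => decide (a ∈ A')) := by
            apply List.filter_congr
            intro a ha
            have h1 : a ≠ i := fun h => hiU (h ▸ ha)
            simp only [decide_eq_decide, Finset.mem_insert]
            tauto
          rw [e1, e2]
        · have : (insert i A') ∩ ({i, j} : Finset ℕ) = {i} := by
            ext x
            simp only [Finset.mem_inter, Finset.mem_insert, Finset.mem_singleton]
            constructor
            · rintro ⟨hx1, hx2⟩
              rcases hx2 with rfl | rfl
              · rfl
              · rcases hx1 with rfl | hx1
                · exact (hij rfl.symm).elim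
                · exact (hjA hx1).elim
            · rintro rfl
              exact ⟨Or.inl rfl, Or.inl rfl⟩
          rw [this, Finset.card_singleton]
      · obtain ⟨A', hA', hiA, hjA, rfl⟩ := (hsub0 z₀).mp hz₀
        refine Or.inl ⟨insert j A', ?_, ?_, ?_⟩
        · rw [Finset.insert_subset_iff]
          exact ⟨by simp, hA'⟩
        · dsimp only
          rw [hG2 (insert j A') (Finset.mem_insert_self j A')
            (by simp [hij, hiA]), hfmS A', hfmU A']
          have e1 : S.filter (fun a => decide (a ∈ insert j A')) =
              S.filter (fun a => decide (a ∈ A')) := by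
            apply List.filter_congr
            intro a ha
            have h1 : a ≠ j := fun h => hjS (h ▸ ha)
            simp only [decide_eq_decide, Finset.mem_insert]
            tauto
          have e2 : U.filter (fun a => decide (a ∈ insert j A')) =
              U.filter (fun a => decide (a ∈ A')) := by
            apply List.filter_congr
            intro a ha
            have h1 : a ≠ j := fun h => hjU (h ▸ ha)
            simp only [decide_eq_decide, Finset.mem_insert]
            tauto
          rw [e1, e2]
        · have : (insert j A') ∩ ({i, j} : Finset ℕ) = {j} := by
            ext x
            simp only [Finset.mem_inter, Finset.mem_insert, Finset.mem_singleton]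
            constructor
            · rintro ⟨hx1, hx2⟩
              rcases hx2 with rfl | rfl
              · rcases hx1 with rfl | hx1
                · exact (hij rfl).elim
                · exact (hiA hx1).elim
              · rfl
            · rintro rfl
              exact ⟨Or.inl rfl, Or.inr rfl⟩
          rw [this, Finset.card_singleton]
      · obtain ⟨A', hA', hiA, hjA, rfl⟩ := (hsub0 z₀).mp hz₀
        refine Or.inr ⟨insert i (insert j A'), ?_, ?_, ?_⟩
        · rw [Finset.insert_subset_iff, Finset.insert_subset_iff]
          exact ⟨by simp, by simp, hA'⟩
        · dsimp only
          rw [hG3 (insert i (insert j A')) (Finset.mem_insert_self i _)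
            (Finset.mem_insert_of_mem (Finset.mem_insert_self j A')), hfmS A', hfmU A']
          have e1 : S.filter (fun a => decide (a ∈ insert i (insert j A'))) =
              S.filter (fun a => decide (a ∈ A')) := by
            apply List.filter_congr
            intro a ha
            have h1 : a ≠ i := fun h => hiS (h ▸ ha)
            have h2 : a ≠ j := fun h => hjS (h ▸ ha)
            simp only [decide_eq_decide, Finset.mem_insert]
            tauto
          have e2 : U.filter (fun a => decide (a ∈ insert i (insert j A'))) =
              U.filter (fun a => decide (a ∈ A')) := by
            apply List.filter_congr
            intro a ha
            have h1 : a ≠ i := fun h => hiU (h ▸ ha)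
            have h2 : a ≠ j := fun h => hjU (h ▸ ha)
            simp only [decide_eq_decide, Finset.mem_insert]
            tauto
          rw [e1, e2]
        · have : (insert i (insert j A')) ∩ ({i, j} : Finset ℕ) = {i, j} := by
            ext x
            simp only [Finset.mem_inter, Finset.mem_insert, Finset.mem_singleton]
            tauto
          rw [this]
          rw [Finset.card_insert_of_notMem (by simpa using hij), Finset.card_singleton]
  · -- disjoint img1 img2
    rw [Set.disjoint_left]
    rintro z ⟨z₀, hz₀, h0⟩ ⟨z₁, hz₁, he⟩
    dsimp only at h0 he
    have h1 : i ∈ z := by rw [← h0]; simp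
    rw [← he] at h1
    simp only [List.mem_append, List.mem_filter, List.mem_singleton] at h1
    rcases h1 with ((h | h) | h) | h
    · exact hiS h.1
    · exact hij h
    · exact hiU h.1
    · exact hij h
  · -- disjoint img1 img3
    rw [Set.disjoint_left]
    rintro z ⟨z₀, hz₀, h0⟩ ⟨z₁, hz₁, he⟩
    dsimp only at h0 he
    have h1 : j ∈ z := by rw [← he]; simp
    rw [← h0] at h1
    simp only [List.mem_append, List.mem_filter, List.mem_singleton] at h1
    rcases h1 with ((h | h) | h) | h
    · exact hjS h.1
    · exact hij h.symm
    · exact hjU h.1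
    · exact hij h.symm
  · -- disjoint img2 img3
    rw [Set.disjoint_left]
    rintro z ⟨z₀, hz₀, h0⟩ ⟨z₁, hz₁, he⟩
    dsimp only at h0 he
    have h1 : i ∈ z := by rw [← he]; simp
    rw [← h0] at h1
    simp only [List.mem_append, List.mem_filter, List.mem_singleton] at h1
    rcases h1 with ((h | h) | h) | h
    · exact hiS h.1
    · exact hij h
    · exact hiU h.1
    · exact hij h
  · -- injOn img1
    intro z₀ h₀ z₁ h₁ heq
    obtain ⟨A', hA', hiA, hjA, rfl⟩ := (hsub0 z₀).mp h₀
    obtain ⟨B', hB', hiB, hjB, rfl⟩ := (hsub0 z₁).mp h₁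
    simp only [hfmS, hfmU] at heq
    have heq' : S.filter (fun a => decide (a ∈ A')) ++
        i :: (U.filter (fun a => decide (a ∈ A')) ++ [i]) =
        S.filter (fun a => decide (a ∈ B')) ++
        i :: (U.filter (fun a => decide (a ∈ B')) ++ [i]) := by
      simpa [List.append_assoc] using heq
    obtain ⟨e1, e2⟩ := SubDecompAux.append_cons_inj (hnotiSf A') (hnotiSf B') heq'
    have e3 := List.append_cancel_right e2
    rw [e1, e3]
  · -- injOn img2
    intro z₀ h₀ z₁ h₁ heq
    obtain ⟨A', hA', hiA, hjA, rfl⟩ := (hsub0 z₀).mp h₀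
    obtain ⟨B', hB', hiB, hjB, rfl⟩ := (hsub0 z₁).mp h₁
    simp only [hfmS, hfmU] at heq
    have heq' : S.filter (fun a => decide (a ∈ A')) ++
        j :: (U.filter (fun a => decide (a ∈ A')) ++ [j]) =
        S.filter (fun a => decide (a ∈ B')) ++
        j :: (U.filter (fun a => decide (a ∈ B')) ++ [j]) := by
      simpa [List.append_assoc] using heq
    obtain ⟨e1, e2⟩ := SubDecompAux.append_cons_inj (hnotjSf A') (hnotjSf B') heq'
    have e3 := List.append_cancel_right e2
    rw [e1, e3]
  · -- injOn img3
    intro z₀ h₀ z₁ h₁ heq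
    obtain ⟨A', hA', hiA, hjA, rfl⟩ := (hsub0 z₀).mp h₀
    obtain ⟨B', hB', hiB, hjB, rfl⟩ := (hsub0 z₁).mp h₁
    simp only [hfmS, hfmU] at heq
    have heq' : S.filter (fun a => decide (a ∈ A')) ++
        i :: (j :: (U.filter (fun a => decide (a ∈ A')) ++ [j, i])) =
        S.filter (fun a => decide (a ∈ B')) ++
        i :: (j :: (U.filter (fun a => decide (a ∈ B')) ++ [j, i])) := by
      simpa [List.append_assoc] using heq
    obtain ⟨e1, e2⟩ := SubDecompAux.append_cons_inj (hnotiSf A') (hnotiSf B') heq'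
    have e2' := List.cons.inj e2
    have e3 := List.append_cancel_right e2'.2
    rw [e1, e3]
end

section
/- Suppose spherical curves P and P' are related by a single Reidemeister move of type RI, so that there are a Gauss word S and a letter i not in S with CD_P = [Sii] and CD_{P'} = [S]. If coefficients α_i (for chord diagrams x_i with between b and d chords) satisfy Σ α_i tilde_x_i([z₀ ii]) = 0 for every sub-Gauss word z₀ of S, then Σ α_i x_i(P) = Σ α_i x_i(P'). -/
open scoped Classical

lemma subCount_eq_sum (y G : List ℕ) : (subCount y G : ℤ) =
    ∑ A ∈ G.toFinset.powerset,
      (if WordIso (G.filter (fun a => decide (a ∈ A))) y then (1:ℤ) else 0) := by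
  classical
  rw [subCount, Finset.card_filter]
  push_cast
  rfl

/-- invariance under RI. If `CD_P = [Sii]` and `CD_{P'} = [S]` and the
functional `Σ αₘ tilde_{xₘ}` (the `xₘ` being chord diagrams with between `b` and `d`
chords) vanishes on all Type (I) relators `[z₀ ii]` arising from sub-Gauss words `z₀`
of `S`, then `Σ αₘ xₘ(P) = Σ αₘ xₘ(P')`. -/
theorem RI_invariance (b d : ℕ) (hb : 2 ≤ b) (hbd : b ≤ d)
    (S : List ℕ) (hS : IsGauss S) (i : ℕ) (hi : i ∉ S)
    {ι : Type*} [Fintype ι] (α : ι → ℤ) (x : ι → List ℕ)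
    (hxg : ∀ m, IsGauss (x m))
    (hxc : ∀ m, 2 * b ≤ (x m).length ∧ (x m).length ≤ 2 * d)
    (h : ∀ z₀ : List ℕ, IsSubword z₀ S →
      ∑ m, α m * (if WordIso (z₀ ++ [i, i]) (x m) then (1 : ℤ) else 0) = 0) :
    ∑ m, α m * (subCount (x m) (S ++ [i, i]) : ℤ) =
      ∑ m, α m * (subCount (x m) S : ℤ) := by
  classical
  have hiS : i ∉ S.toFinset := by simpa using hi
  have hpow : ((S ++ [i, i]).toFinset.powerset.filter (fun A => ¬ i ∈ A))
      = S.toFinset.powerset := by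
    ext A
    simp only [Finset.mem_filter, Finset.mem_powerset, List.toFinset_append]
    constructor
    · rintro ⟨hA, hiA⟩ a ha
      have h2 := hA ha
      simp only [Finset.mem_union, List.toFinset_cons, List.toFinset_nil,
        LawfulSingleton.insert_empty_eq, Finset.mem_insert, Finset.mem_singleton, or_self] at h2
      rcases h2 with h2 | h2
      · exact h2
      · exact absurd (h2 ▸ ha) hiA
    · intro hA
      refine ⟨fun a ha => ?_, fun hiA => hiS (hA hiA)⟩
      simp [hA ha]
  simp only [subCount_eq_sum]
  simp_rw [Finset.mul_sum]
  rw [Finset.sum_comm, Finset.sum_comm (s := Finset.univ)]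
  rw [← Finset.sum_filter_add_sum_filter_not ((S ++ [i, i]).toFinset.powerset)
      (fun A => i ∈ A)]
  have Z : ∑ A ∈ ((S ++ [i, i]).toFinset.powerset.filter (fun A => i ∈ A)),
      ∑ m, α m * (if WordIso ((S ++ [i, i]).filter (fun a => decide (a ∈ A))) (x m)
        then (1:ℤ) else 0) = 0 := by
    refine Finset.sum_eq_zero fun A hA => ?_
    have hiA : i ∈ A := (Finset.mem_filter.mp hA).2
    have hfilt : (S ++ [i, i]).filter (fun a => decide (a ∈ A))
        = S.filter (fun a => decide (a ∈ A)) ++ [i, i] := by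
      simp [List.filter_append, hiA]
    rw [hfilt]
    exact h _ ⟨A, rfl⟩
  rw [Z, zero_add, hpow]
  refine Finset.sum_congr rfl fun A hA => ?_
  have hiA : i ∉ A := fun hiA => hiS (Finset.mem_powerset.mp hA hiA)
  have hfilt : (S ++ [i, i]).filter (fun a => decide (a ∈ A))
      = S.filter (fun a => decide (a ∈ A)) := by
    simp [List.filter_append, hiA]
  rw [hfilt]
end

section
/- Suppose spherical curves P and P' are related by a single strong Reidemeister II move, with CD_P = [SijTji] and CD_{P'} = [ST] for Gauss words S, T and fresh letters i, j. Then Σ α_i x_i(P) − Σ α_i x_i(P') = Σ over z₀ ∈ Sub^(0)(SijTji) of (Σ α_i tilde_x_i)([σ(z₀)ij τ(z₀)ji] + [σ(z₀)i τ(z₀)i] + [σ(z₀)j τ(z₀)j]), where z₀ = σ(z₀)τ(z₀) is the unique decomposition of z₀ into sub-words of S and T. In particular, if the functional Σ α_i tilde_x_i vanishes on all Type (SII) relators, then Σ α_i x_i(P) = Σ α_i x_i(P'). -/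
open scoped Classical

section Aux

private lemma filter_insert_of_not_mem (L : List ℕ) (j : ℕ) (t : Finset ℕ) (hj : j ∉ L) :
    L.filter (fun a => decide (a ∈ insert j t)) = L.filter (fun a => decide (a ∈ t)) := by
  apply List.filter_congr
  intro a ha
  have : a ≠ j := fun h => hj (h ▸ ha)
  simp [Finset.mem_insert, this]

private lemma cast_subCount (y G : List ℕ) :
    (subCount y G : ℤ) = ∑ A ∈ G.toFinset.powerset,
      if WordIso (G.filter (fun a => decide (a ∈ A))) y then (1 : ℤ) else 0 := by
  rw [subCount, Finset.card_filter, Nat.cast_sum]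
  simp

private lemma key (S U : List ℕ) (i j : ℕ)
    (hi : i ∉ S ++ U) (hj : j ∉ S ++ U) (hij : i ≠ j) (x : List ℕ) :
    (subCount x (S ++ [i, j] ++ U ++ [j, i]) : ℤ) = (subCount x (S ++ U) : ℤ) +
      ∑ A ∈ (S ++ U).toFinset.powerset,
        ((if WordIso (S.filter (fun a => decide (a ∈ A)) ++ [i, j] ++
              U.filter (fun a => decide (a ∈ A)) ++ [j, i]) x then (1 : ℤ) else 0) +
         (if WordIso (S.filter (fun a => decide (a ∈ A)) ++ [i] ++
              U.filter (fun a => decide (a ∈ A)) ++ [i]) x then (1 : ℤ) else 0) +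
         (if WordIso (S.filter (fun a => decide (a ∈ A)) ++ [j] ++
              U.filter (fun a => decide (a ∈ A)) ++ [j]) x then (1 : ℤ) else 0)) := by
  have hiS : i ∉ S := fun h => hi (List.mem_append.mpr (Or.inl h))
  have hiU : i ∉ U := fun h => hi (List.mem_append.mpr (Or.inr h))
  have hjS : j ∉ S := fun h => hj (List.mem_append.mpr (Or.inl h))
  have hjU : j ∉ U := fun h => hj (List.mem_append.mpr (Or.inr h))
  have hiW : i ∉ (S ++ U).toFinset := by simp only [List.toFinset_append, Finset.mem_union, List.mem_toFinset]; tauto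
  have hjW : j ∉ (S ++ U).toFinset := by simp only [List.toFinset_append, Finset.mem_union, List.mem_toFinset]; tauto
  have hG : (S ++ [i, j] ++ U ++ [j, i]).toFinset = insert i (insert j (S ++ U).toFinset) := by
    ext a
    simp [List.mem_append]
    tauto
  have hijW : i ∉ insert j (S ++ U).toFinset := fun h => (Finset.mem_insert.mp h).elim hij hiW
  rw [cast_subCount, cast_subCount, hG,
    Finset.sum_powerset_insert hijW, Finset.sum_powerset_insert hjW,
    Finset.sum_powerset_insert hjW]
  rw [← Finset.sum_add_distrib, ← Finset.sum_add_distrib, ← Finset.sum_add_distrib,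
    ← Finset.sum_add_distrib]
  apply Finset.sum_congr rfl
  intro t ht
  have htW : t ⊆ (S ++ U).toFinset := Finset.mem_powerset.mp ht
  have hit : i ∉ t := fun h => hiW (htW h)
  have hjt : j ∉ t := fun h => hjW (htW h)
  have e0 : (S ++ [i, j] ++ U ++ [j, i]).filter (fun a => decide (a ∈ t)) =
      (S ++ U).filter (fun a => decide (a ∈ t)) := by
    simp [List.filter_append, List.filter_cons, hit, hjt]
  have eS1 : S.filter (fun a => decide (a ∈ insert j t)) = S.filter (fun a => decide (a ∈ t)) :=
    filter_insert_of_not_mem S j t hjS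
  have eU1 : U.filter (fun a => decide (a ∈ insert j t)) = U.filter (fun a => decide (a ∈ t)) :=
    filter_insert_of_not_mem U j t hjU
  have eS2 : S.filter (fun a => decide (a ∈ insert i t)) = S.filter (fun a => decide (a ∈ t)) :=
    filter_insert_of_not_mem S i t hiS
  have eU2 : U.filter (fun a => decide (a ∈ insert i t)) = U.filter (fun a => decide (a ∈ t)) :=
    filter_insert_of_not_mem U i t hiU
  have eS3 : S.filter (fun a => decide (a ∈ insert i (insert j t))) =
      S.filter (fun a => decide (a ∈ t)) := by
    rw [filter_insert_of_not_mem S i _ hiS, eS1]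
  have eU3 : U.filter (fun a => decide (a ∈ insert i (insert j t))) =
      U.filter (fun a => decide (a ∈ t)) := by
    rw [filter_insert_of_not_mem U i _ hiU, eU1]
  have e1 : (S ++ [i, j] ++ U ++ [j, i]).filter (fun a => decide (a ∈ insert i (insert j t))) =
      S.filter (fun a => decide (a ∈ t)) ++ [i, j] ++ U.filter (fun a => decide (a ∈ t)) ++ [j, i] := by
    simp only [List.filter_append, eS3, eU3]
    simp
  have e2 : (S ++ [i, j] ++ U ++ [j, i]).filter (fun a => decide (a ∈ insert i t)) =
      S.filter (fun a => decide (a ∈ t)) ++ [i] ++ U.filter (fun a => decide (a ∈ t)) ++ [i] := by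
    have hji : j ≠ i := Ne.symm hij
    simp only [List.filter_append, eS2, eU2]
    simp [hjt, hji]
  have e3 : (S ++ [i, j] ++ U ++ [j, i]).filter (fun a => decide (a ∈ insert j t)) =
      S.filter (fun a => decide (a ∈ t)) ++ [j] ++ U.filter (fun a => decide (a ∈ t)) ++ [j] := by
    simp only [List.filter_append, eS1, eU1]
    simp [hit, hij]
  rw [e0, e1, e2, e3]
  ring

end Aux

/-- strong RII. With `CD_P = [SijUji]` and `CD_{P'} = [SU]`,
`Σ αₘ xₘ(P) − Σ αₘ xₘ(P')` equals the sum, over the sub-Gauss words `z₀` of `SU`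
(parametrized by the retained letter sets `A`, with `σ(z₀)`, `τ(z₀)` the induced
sub-words of `S` and `U`), of the value of `Σ αₘ tilde_{xₘ}` on the Type (SII) relator
`[σ(z₀)ij τ(z₀)ji] + [σ(z₀)i τ(z₀)i] + [σ(z₀)j τ(z₀)j]`.  In particular, if
`Σ αₘ tilde_{xₘ}` vanishes on all Type (SII) relators then `Σ αₘ xₘ(P) = Σ αₘ xₘ(P')`. -/
theorem strongRII_invariance (S U : List ℕ) (hSU : IsGauss (S ++ U))
    (i j : ℕ) (hi : i ∉ S ++ U) (hj : j ∉ S ++ U) (hij : i ≠ j)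
    {ι : Type*} [Fintype ι] (α : ι → ℤ) (x : ι → List ℕ)
    (hxg : ∀ m, IsGauss (x m)) :
    ((∑ m, α m * (subCount (x m) (S ++ [i, j] ++ U ++ [j, i]) : ℤ)) -
        ∑ m, α m * (subCount (x m) (S ++ U) : ℤ) =
      ∑ A ∈ (S ++ U).toFinset.powerset, ∑ m, α m *
        ((if WordIso (S.filter (fun a => decide (a ∈ A)) ++ [i, j] ++
              U.filter (fun a => decide (a ∈ A)) ++ [j, i]) (x m) then (1 : ℤ) else 0) +
         (if WordIso (S.filter (fun a => decide (a ∈ A)) ++ [i] ++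
              U.filter (fun a => decide (a ∈ A)) ++ [i]) (x m) then (1 : ℤ) else 0) +
         (if WordIso (S.filter (fun a => decide (a ∈ A)) ++ [j] ++
              U.filter (fun a => decide (a ∈ A)) ++ [j]) (x m) then (1 : ℤ) else 0))) ∧
    ((∀ (S' U' : List ℕ) (i' j' : ℕ), IsGauss (S' ++ U') →
        i' ∉ S' ++ U' → j' ∉ S' ++ U' → i' ≠ j' →
        ∑ m, α m *
          ((if WordIso (S' ++ [i', j'] ++ U' ++ [j', i']) (x m) then (1 : ℤ) else 0) +
           (if WordIso (S' ++ [i'] ++ U' ++ [i']) (x m) then (1 : ℤ) else 0) +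
           (if WordIso (S' ++ [j'] ++ U' ++ [j']) (x m) then (1 : ℤ) else 0)) = 0) →
      ∑ m, α m * (subCount (x m) (S ++ [i, j] ++ U ++ [j, i]) : ℤ) =
        ∑ m, α m * (subCount (x m) (S ++ U) : ℤ)) := by
  have main : ∀ m, (subCount (x m) (S ++ [i, j] ++ U ++ [j, i]) : ℤ) =
      (subCount (x m) (S ++ U) : ℤ) + ∑ A ∈ (S ++ U).toFinset.powerset,
        ((if WordIso (S.filter (fun a => decide (a ∈ A)) ++ [i, j] ++
              U.filter (fun a => decide (a ∈ A)) ++ [j, i]) (x m) then (1 : ℤ) else 0) +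
         (if WordIso (S.filter (fun a => decide (a ∈ A)) ++ [i] ++
              U.filter (fun a => decide (a ∈ A)) ++ [i]) (x m) then (1 : ℤ) else 0) +
         (if WordIso (S.filter (fun a => decide (a ∈ A)) ++ [j] ++
              U.filter (fun a => decide (a ∈ A)) ++ [j]) (x m) then (1 : ℤ) else 0)) :=
    fun m => key S U i j hi hj hij (x m)
  have part1 : (∑ m, α m * (subCount (x m) (S ++ [i, j] ++ U ++ [j, i]) : ℤ)) -
        ∑ m, α m * (subCount (x m) (S ++ U) : ℤ) =
      ∑ A ∈ (S ++ U).toFinset.powerset, ∑ m, α m *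
        ((if WordIso (S.filter (fun a => decide (a ∈ A)) ++ [i, j] ++
              U.filter (fun a => decide (a ∈ A)) ++ [j, i]) (x m) then (1 : ℤ) else 0) +
         (if WordIso (S.filter (fun a => decide (a ∈ A)) ++ [i] ++
              U.filter (fun a => decide (a ∈ A)) ++ [i]) (x m) then (1 : ℤ) else 0) +
         (if WordIso (S.filter (fun a => decide (a ∈ A)) ++ [j] ++
              U.filter (fun a => decide (a ∈ A)) ++ [j]) (x m) then (1 : ℤ) else 0)) := by
    rw [Finset.sum_comm, ← Finset.sum_sub_distrib]
    apply Finset.sum_congr rfl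
    intro m _
    rw [main m, mul_add, Finset.mul_sum]
    ring
  refine ⟨part1, fun hvan => ?_⟩
  have hz : ∀ A ∈ (S ++ U).toFinset.powerset, (∑ m, α m *
        ((if WordIso (S.filter (fun a => decide (a ∈ A)) ++ [i, j] ++
              U.filter (fun a => decide (a ∈ A)) ++ [j, i]) (x m) then (1 : ℤ) else 0) +
         (if WordIso (S.filter (fun a => decide (a ∈ A)) ++ [i] ++
              U.filter (fun a => decide (a ∈ A)) ++ [i]) (x m) then (1 : ℤ) else 0) +
         (if WordIso (S.filter (fun a => decide (a ∈ A)) ++ [j] ++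
              U.filter (fun a => decide (a ∈ A)) ++ [j]) (x m) then (1 : ℤ) else 0))) = 0 := by
    intro A hA
    have hAW : A ⊆ (S ++ U).toFinset := Finset.mem_powerset.mp hA
    set S' := S.filter (fun a => decide (a ∈ A)) with hS'
    set U' := U.filter (fun a => decide (a ∈ A)) with hU'
    have hfil : S' ++ U' = (S ++ U).filter (fun a => decide (a ∈ A)) := by
      simp [hS', hU', List.filter_append]
    have hgauss : IsGauss (S' ++ U') := by
      intro a ha
      rw [hfil] at ha ⊢
      obtain ⟨hamem, hpa⟩ := List.mem_filter.mp ha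
      have hc := List.count_filter (p := fun b => decide (b ∈ A)) (a := a) (l := S ++ U)
        (by simpa using hpa)
      rw [hc]
      exact hSU a hamem
    have hi' : i ∉ S' ++ U' := fun h => hi (by
      rw [hfil] at h; exact List.mem_of_mem_filter h)
    have hj' : j ∉ S' ++ U' := fun h => hj (by
      rw [hfil] at h; exact List.mem_of_mem_filter h)
    exact hvan S' U' i j hgauss hi' hj' hij
  have := Finset.sum_eq_zero hz
  rw [this] at part1
  linarith [part1]
end

section
/- Suppose spherical curves P and P' are related by a single strong Reidemeister III move, with CD_P = [SijTkiUjk] and CD_{P'} = [SjiTikUkj] for Gauss words S, T, U and fresh letters i, j, k. If the coefficients α_i satisfy Σ α_i tilde_x_i(r) = 0 for every Type (SIII) relator r, then Σ α_i x_i(P) = Σ α_i x_i(P'). -/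
open scoped Classical

/-- strong RIII. Suppose `CD_P = [SijTkiUjk]` and `CD_{P'} = [SjiTikUkj]`.
If the functional `Σ αₘ tilde_{xₘ}` vanishes on every Type (SIII) relator
`([S'ijT'kiU'jk] + [S'ijT'iU'j] + [S'iT'kiU'k] + [S'jT'kU'jk])
 − ([S'jiT'ikU'kj] + [S'jiT'iU'j] + [S'iT'ikU'k] + [S'jT'kU'kj])`,
then `Σ αₘ xₘ(P) = Σ αₘ xₘ(P')`. -/
theorem strongRIII_invariance (S T U : List ℕ) (hSTU : IsGauss (S ++ T ++ U))
    (i j k : ℕ) (hi : i ∉ S ++ T ++ U) (hj : j ∉ S ++ T ++ U) (hk : k ∉ S ++ T ++ U)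
    (hij : i ≠ j) (hik : i ≠ k) (hjk : j ≠ k)
    {ι : Type*} [Fintype ι] (α : ι → ℤ) (x : ι → List ℕ)
    (hxg : ∀ m, IsGauss (x m))
    (h : ∀ (S' T' U' : List ℕ) (i' j' k' : ℕ), IsGauss (S' ++ T' ++ U') →
      i' ∉ S' ++ T' ++ U' → j' ∉ S' ++ T' ++ U' → k' ∉ S' ++ T' ++ U' →
      i' ≠ j' → i' ≠ k' → j' ≠ k' →
      ∑ m, α m *
        (((if WordIso (S' ++ [i', j'] ++ T' ++ [k', i'] ++ U' ++ [j', k']) (x m)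
            then (1 : ℤ) else 0) +
          (if WordIso (S' ++ [i', j'] ++ T' ++ [i'] ++ U' ++ [j']) (x m)
            then (1 : ℤ) else 0) +
          (if WordIso (S' ++ [i'] ++ T' ++ [k', i'] ++ U' ++ [k']) (x m)
            then (1 : ℤ) else 0) +
          (if WordIso (S' ++ [j'] ++ T' ++ [k'] ++ U' ++ [j', k']) (x m)
            then (1 : ℤ) else 0)) -
         ((if WordIso (S' ++ [j', i'] ++ T' ++ [i', k'] ++ U' ++ [k', j']) (x m)
            then (1 : ℤ) else 0) +
          (if WordIso (S' ++ [j', i'] ++ T' ++ [i'] ++ U' ++ [j']) (x m)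
            then (1 : ℤ) else 0) +
          (if WordIso (S' ++ [i'] ++ T' ++ [i', k'] ++ U' ++ [k']) (x m)
            then (1 : ℤ) else 0) +
          (if WordIso (S' ++ [j'] ++ T' ++ [k'] ++ U' ++ [k', j']) (x m)
            then (1 : ℤ) else 0))) = 0) :
    ∑ m, α m * (subCount (x m) (S ++ [i, j] ++ T ++ [k, i] ++ U ++ [j, k]) : ℤ) =
      ∑ m, α m * (subCount (x m) (S ++ [j, i] ++ T ++ [i, k] ++ U ++ [k, j]) : ℤ) := by
  classical
  -- basic membership facts
  have hiS : i ∉ S := fun h' => hi (by simp [h'])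
  have hiT : i ∉ T := fun h' => hi (by simp [h'])
  have hiU : i ∉ U := fun h' => hi (by simp [h'])
  have hjS : j ∉ S := fun h' => hj (by simp [h'])
  have hjT : j ∉ T := fun h' => hj (by simp [h'])
  have hjU : j ∉ U := fun h' => hj (by simp [h'])
  have hkS : k ∉ S := fun h' => hk (by simp [h'])
  have hkT : k ∉ T := fun h' => hk (by simp [h'])
  have hkU : k ∉ U := fun h' => hk (by simp [h'])
  -- strip lemma
  have hstrip : ∀ (L : List ℕ) (c : ℕ), c ∉ L → ∀ (A : Finset ℕ),
      L.filter (fun a => decide (a ∈ insert c A)) = L.filter (fun a => decide (a ∈ A)) := by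
    intro L c hc A
    apply List.filter_congr
    intro a ha
    have hac : a ≠ c := fun hh => hc (hh ▸ ha)
    simp [Finset.mem_insert, hac]
  have hSi := hstrip S i hiS
  have hSj := hstrip S j hjS
  have hSk := hstrip S k hkS
  have hTi := hstrip T i hiT
  have hTj := hstrip T j hjT
  have hTk := hstrip T k hkT
  have hUi := hstrip U i hiU
  have hUj := hstrip U j hjU
  have hUk := hstrip U k hkU
  -- subCount as a sum
  have hsub : ∀ (Gw : List ℕ) (m : ι), (subCount (x m) Gw : ℤ) =
      ∑ A ∈ Gw.toFinset.powerset,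
        (if WordIso (Gw.filter (fun a => decide (a ∈ A))) (x m) then (1 : ℤ) else 0) := by
    intro Gw m
    rw [subCount, Finset.card_filter]
    push_cast
    rfl
  -- toFinset computations
  have hGt : (S ++ [i, j] ++ T ++ [k, i] ++ U ++ [j, k]).toFinset
      = insert i (insert j (insert k (S ++ T ++ U).toFinset)) := by
    ext a; simp
  have hGt' : (S ++ [j, i] ++ T ++ [i, k] ++ U ++ [k, j]).toFinset
      = insert i (insert j (insert k (S ++ T ++ U).toFinset)) := by
    ext a; simp; tauto
  have h1 : i ∉ insert j (insert k (S ++ T ++ U).toFinset) := by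
    simp only [Finset.mem_insert, List.mem_toFinset]
    push_neg
    exact ⟨hij, hik, hi⟩
  have h2 : j ∉ insert k (S ++ T ++ U).toFinset := by
    simp only [Finset.mem_insert, List.mem_toFinset]
    push_neg
    exact ⟨hjk, hj⟩
  have h3 : k ∉ (S ++ T ++ U).toFinset := by simpa using hk
  simp only [hsub, hGt, hGt', Finset.mul_sum]
  conv_lhs => rw [Finset.sum_comm]
  conv_rhs => rw [Finset.sum_comm]
  simp only [Finset.sum_powerset_insert h1, Finset.sum_powerset_insert h2,
    Finset.sum_powerset_insert h3]
  simp only [← Finset.sum_add_distrib]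
  refine Finset.sum_congr rfl fun A0 hA0 => ?_
  have hA0' : A0 ⊆ (S ++ T ++ U).toFinset := Finset.mem_powerset.1 hA0
  have hiA0 : i ∉ A0 := fun hh => hi (by simpa using hA0' hh)
  have hjA0 : j ∉ A0 := fun hh => hj (by simpa using hA0' hh)
  have hkA0 : k ∉ A0 := fun hh => hk (by simpa using hA0' hh)
  have hji := Ne.symm hij
  have hki := Ne.symm hik
  have hkj := Ne.symm hjk
  -- filter computations
  have eG0 : (S ++ [i, j] ++ T ++ [k, i] ++ U ++ [j, k]).filter (fun a => decide (a ∈ A0))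
      = S.filter (fun a => decide (a ∈ A0)) ++ T.filter (fun a => decide (a ∈ A0))
        ++ U.filter (fun a => decide (a ∈ A0)) := by
    simp only [List.filter_append]
    simp [hiA0, hjA0, hkA0]
  have eG0' : (S ++ [j, i] ++ T ++ [i, k] ++ U ++ [k, j]).filter (fun a => decide (a ∈ A0))
      = S.filter (fun a => decide (a ∈ A0)) ++ T.filter (fun a => decide (a ∈ A0))
        ++ U.filter (fun a => decide (a ∈ A0)) := by
    simp only [List.filter_append]
    simp [hiA0, hjA0, hkA0]
  have eGi : (S ++ [i, j] ++ T ++ [k, i] ++ U ++ [j, k]).filter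
        (fun a => decide (a ∈ insert i A0))
      = S.filter (fun a => decide (a ∈ A0)) ++ [i] ++ T.filter (fun a => decide (a ∈ A0))
        ++ [i] ++ U.filter (fun a => decide (a ∈ A0)) := by
    simp only [List.filter_append, hSi, hTi, hUi]
    simp [hji, hki, hjA0, hkA0]
  have eGi' : (S ++ [j, i] ++ T ++ [i, k] ++ U ++ [k, j]).filter
        (fun a => decide (a ∈ insert i A0))
      = S.filter (fun a => decide (a ∈ A0)) ++ [i] ++ T.filter (fun a => decide (a ∈ A0))
        ++ [i] ++ U.filter (fun a => decide (a ∈ A0)) := by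
    simp only [List.filter_append, hSi, hTi, hUi]
    simp [hji, hki, hjA0, hkA0]
  have eGj : (S ++ [i, j] ++ T ++ [k, i] ++ U ++ [j, k]).filter
        (fun a => decide (a ∈ insert j A0))
      = S.filter (fun a => decide (a ∈ A0)) ++ [j] ++ T.filter (fun a => decide (a ∈ A0))
        ++ U.filter (fun a => decide (a ∈ A0)) ++ [j] := by
    simp only [List.filter_append, hSj, hTj, hUj]
    simp [hij, hkj, hiA0, hkA0]
  have eGj' : (S ++ [j, i] ++ T ++ [i, k] ++ U ++ [k, j]).filter
        (fun a => decide (a ∈ insert j A0))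
      = S.filter (fun a => decide (a ∈ A0)) ++ [j] ++ T.filter (fun a => decide (a ∈ A0))
        ++ U.filter (fun a => decide (a ∈ A0)) ++ [j] := by
    simp only [List.filter_append, hSj, hTj, hUj]
    simp [hij, hkj, hiA0, hkA0]
  have eGk : (S ++ [i, j] ++ T ++ [k, i] ++ U ++ [j, k]).filter
        (fun a => decide (a ∈ insert k A0))
      = S.filter (fun a => decide (a ∈ A0)) ++ T.filter (fun a => decide (a ∈ A0))
        ++ [k] ++ U.filter (fun a => decide (a ∈ A0)) ++ [k] := by
    simp only [List.filter_append, hSk, hTk, hUk]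
    simp [hik, hjk, hiA0, hjA0]
  have eGk' : (S ++ [j, i] ++ T ++ [i, k] ++ U ++ [k, j]).filter
        (fun a => decide (a ∈ insert k A0))
      = S.filter (fun a => decide (a ∈ A0)) ++ T.filter (fun a => decide (a ∈ A0))
        ++ [k] ++ U.filter (fun a => decide (a ∈ A0)) ++ [k] := by
    simp only [List.filter_append, hSk, hTk, hUk]
    simp [hik, hjk, hiA0, hjA0]
  have eGij : (S ++ [i, j] ++ T ++ [k, i] ++ U ++ [j, k]).filter
        (fun a => decide (a ∈ insert i (insert j A0)))
      = S.filter (fun a => decide (a ∈ A0)) ++ [i, j] ++ T.filter (fun a => decide (a ∈ A0))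
        ++ [i] ++ U.filter (fun a => decide (a ∈ A0)) ++ [j] := by
    simp only [List.filter_append, hSi, hSj, hTi, hTj, hUi, hUj]
    simp [hki, hkj, hkA0, hij, hji]
  have eGij' : (S ++ [j, i] ++ T ++ [i, k] ++ U ++ [k, j]).filter
        (fun a => decide (a ∈ insert i (insert j A0)))
      = S.filter (fun a => decide (a ∈ A0)) ++ [j, i] ++ T.filter (fun a => decide (a ∈ A0))
        ++ [i] ++ U.filter (fun a => decide (a ∈ A0)) ++ [j] := by
    simp only [List.filter_append, hSi, hSj, hTi, hTj, hUi, hUj]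
    simp [hki, hkj, hkA0, hij, hji]
  have eGik : (S ++ [i, j] ++ T ++ [k, i] ++ U ++ [j, k]).filter
        (fun a => decide (a ∈ insert i (insert k A0)))
      = S.filter (fun a => decide (a ∈ A0)) ++ [i] ++ T.filter (fun a => decide (a ∈ A0))
        ++ [k, i] ++ U.filter (fun a => decide (a ∈ A0)) ++ [k] := by
    simp only [List.filter_append, hSi, hSk, hTi, hTk, hUi, hUk]
    simp [hji, hjk, hjA0, hik, hki]
  have eGik' : (S ++ [j, i] ++ T ++ [i, k] ++ U ++ [k, j]).filter
        (fun a => decide (a ∈ insert i (insert k A0)))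
      = S.filter (fun a => decide (a ∈ A0)) ++ [i] ++ T.filter (fun a => decide (a ∈ A0))
        ++ [i, k] ++ U.filter (fun a => decide (a ∈ A0)) ++ [k] := by
    simp only [List.filter_append, hSi, hSk, hTi, hTk, hUi, hUk]
    simp [hji, hjk, hjA0, hik, hki]
  have eGjk : (S ++ [i, j] ++ T ++ [k, i] ++ U ++ [j, k]).filter
        (fun a => decide (a ∈ insert j (insert k A0)))
      = S.filter (fun a => decide (a ∈ A0)) ++ [j] ++ T.filter (fun a => decide (a ∈ A0))
        ++ [k] ++ U.filter (fun a => decide (a ∈ A0)) ++ [j, k] := by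
    simp only [List.filter_append, hSj, hSk, hTj, hTk, hUj, hUk]
    simp [hij, hik, hiA0, hjk, hkj]
  have eGjk' : (S ++ [j, i] ++ T ++ [i, k] ++ U ++ [k, j]).filter
        (fun a => decide (a ∈ insert j (insert k A0)))
      = S.filter (fun a => decide (a ∈ A0)) ++ [j] ++ T.filter (fun a => decide (a ∈ A0))
        ++ [k] ++ U.filter (fun a => decide (a ∈ A0)) ++ [k, j] := by
    simp only [List.filter_append, hSj, hSk, hTj, hTk, hUj, hUk]
    simp [hij, hik, hiA0, hjk, hkj]
  have eGijk : (S ++ [i, j] ++ T ++ [k, i] ++ U ++ [j, k]).filter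
        (fun a => decide (a ∈ insert i (insert j (insert k A0))))
      = S.filter (fun a => decide (a ∈ A0)) ++ [i, j] ++ T.filter (fun a => decide (a ∈ A0))
        ++ [k, i] ++ U.filter (fun a => decide (a ∈ A0)) ++ [j, k] := by
    simp only [List.filter_append, hSi, hSj, hSk, hTi, hTj, hTk, hUi, hUj, hUk]
    simp [hij, hji, hik, hki, hjk, hkj]
  have eGijk' : (S ++ [j, i] ++ T ++ [i, k] ++ U ++ [k, j]).filter
        (fun a => decide (a ∈ insert i (insert j (insert k A0))))
      = S.filter (fun a => decide (a ∈ A0)) ++ [j, i] ++ T.filter (fun a => decide (a ∈ A0))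
        ++ [i, k] ++ U.filter (fun a => decide (a ∈ A0)) ++ [k, j] := by
    simp only [List.filter_append, hSi, hSj, hSk, hTi, hTj, hTk, hUi, hUj, hUk]
    simp [hij, hji, hik, hki, hjk, hkj]
  simp only [eG0, eG0', eGi, eGi', eGj, eGj', eGk, eGk', eGij, eGij', eGik, eGik', eGjk, eGjk',
    eGijk, eGijk']
  -- apply the relator hypothesis
  have hg : IsGauss (S.filter (fun a => decide (a ∈ A0)) ++ T.filter (fun a => decide (a ∈ A0))
      ++ U.filter (fun a => decide (a ∈ A0))) := by
    have heq : S.filter (fun a => decide (a ∈ A0)) ++ T.filter (fun a => decide (a ∈ A0))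
        ++ U.filter (fun a => decide (a ∈ A0))
        = (S ++ T ++ U).filter (fun a => decide (a ∈ A0)) := by
      simp [List.filter_append]
    rw [heq]
    intro a ha
    obtain ⟨haw, hpa⟩ := List.mem_filter.1 ha
    rw [List.count_filter (p := fun b => decide (b ∈ A0)) (by simpa using hpa)]
    exact hSTU a haw
  have hi' : i ∉ S.filter (fun a => decide (a ∈ A0)) ++ T.filter (fun a => decide (a ∈ A0))
      ++ U.filter (fun a => decide (a ∈ A0)) := by
    simp [List.mem_append, List.mem_filter, hiA0]
  have hj' : j ∉ S.filter (fun a => decide (a ∈ A0)) ++ T.filter (fun a => decide (a ∈ A0))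
      ++ U.filter (fun a => decide (a ∈ A0)) := by
    simp [List.mem_append, List.mem_filter, hjA0]
  have hk' : k ∉ S.filter (fun a => decide (a ∈ A0)) ++ T.filter (fun a => decide (a ∈ A0))
      ++ U.filter (fun a => decide (a ∈ A0)) := by
    simp [List.mem_append, List.mem_filter, hkA0]
  have hrel := h (S.filter (fun a => decide (a ∈ A0))) (T.filter (fun a => decide (a ∈ A0)))
    (U.filter (fun a => decide (a ∈ A0))) i j k hg hi' hj' hk' hij hik hjk
  rw [← sub_eq_zero, ← Finset.sum_sub_distrib]
  refine Eq.trans (Finset.sum_congr rfl fun m _ => ?_) hrel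
  ring
end

section
/- If x is a connected chord diagram with at least two chords, then for any spherical curves P₁, P₂ and any connected sum P₁ # P₂ of them, x(P₁ # P₂) = x(P₁) + x(P₂). Equivalently on Gauss words: if G₁ and G₂ are Gauss words on disjoint letter sets and x is a connected chord diagram with at least two chords, then x([G₁G₂]) = x([G₁]) + x([G₂]). -/
open scoped Classical

lemma wordIso_length {v w : List ℕ} (h : WordIso v w) : w.length = v.length := by
  obtain ⟨f, _, t, h | h⟩ := h <;> simp [h]

lemma rotate_cancel (l : List ℕ) (t : ℕ) :
    (l.rotate t).rotate (l.length - t % l.length) = l := by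
  rcases eq_or_ne l [] with rfl | hl
  · simp
  · have hn : 0 < l.length := List.length_pos_iff.mpr hl
    rw [List.rotate_rotate, ← List.rotate_mod]
    have hd := Nat.div_add_mod t l.length
    have hm : t % l.length < l.length := Nat.mod_lt _ hn
    have he : t + (l.length - t % l.length) = l.length * (t / l.length + 1) := by
      rw [Nat.mul_succ]
      generalize l.length * (t / l.length) = q at hd ⊢
      omega
    rw [he, Nat.mul_mod_right, List.rotate_zero]

lemma wordIso_symm {v w : List ℕ} (h : WordIso v w) : WordIso w v := by
  obtain ⟨f, hf, t, hw⟩ := h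
  rcases eq_or_ne v [] with rfl | hv
  · have hw0 : w = [] := by rcases hw with h | h <;> simp [h]
    subst hw0
    exact ⟨id, by simp, 0, Or.inl (by simp)⟩
  · set g := Function.invFunOn f {a | a ∈ v} with hg
    have hgf : ∀ a ∈ v, g (f a) = a := fun a ha => hf.leftInvOn_invFunOn ha
    have hmemw : ∀ b ∈ w, ∃ a ∈ v, f a = b := by
      intro b hb
      rcases hw with h | h <;> rw [h] at hb
      · rw [List.mem_rotate, List.mem_map] at hb; exact hb
      · rw [List.mem_rotate, List.mem_reverse, List.mem_map] at hb; exact hb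
    have hginj : Set.InjOn g {a | a ∈ w} := by
      intro b1 hb1 b2 hb2 hgb
      obtain ⟨a1, ha1, rfl⟩ := hmemw b1 hb1
      obtain ⟨a2, ha2, rfl⟩ := hmemw b2 hb2
      rw [hgf a1 ha1, hgf a2 ha2] at hgb
      rw [hgb]
    have hmapv : (v.map f).map g = v := by
      rw [List.map_map]
      conv_rhs => rw [← List.map_id v]
      exact List.map_congr_left hgf
    have hlw : w.length = v.length := wordIso_length ⟨f, hf, t, hw⟩
    rcases hw with h | h
    · have key : w.map g = v.rotate t := by
        rw [h, List.map_rotate, hmapv]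
      refine ⟨g, hginj, v.length - t % v.length, Or.inl ?_⟩
      rw [key]
      exact (rotate_cancel v t).symm
    · have key : w.map g = (v.reverse).rotate t := by
        rw [h, List.map_rotate, List.map_reverse, hmapv]
      have key2 : (w.map g).reverse = v.rotate (v.length - t % v.length) := by
        rw [key, List.reverse_rotate, List.reverse_reverse, List.length_reverse]
      refine ⟨g, hginj,
        v.length - (v.length - t % v.length) % v.length, Or.inr ?_⟩
      rw [key2]
      exact (rotate_cancel v (v.length - t % v.length)).symm

/-- if `x` is a connected chord diagram with at least two chords, then
the count of `x` is additive under connected sum; on Gauss words: for `G₁`, `G₂` on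
disjoint letter sets, `x([G₁G₂]) = x([G₁]) + x([G₂])`. -/
theorem connected_count_additive (x : List ℕ) (hx : IsGauss x)
    (hconn : ¬ IsProductDiagram x) (hlen : 4 ≤ x.length)
    (G₁ G₂ : List ℕ) (h1 : IsGauss G₁) (h2 : IsGauss G₂)
    (hdisj : ∀ a ∈ G₁, a ∉ G₂) :
    subCount x (G₁ ++ G₂) = subCount x G₁ + subCount x G₂ := by
  classical
  have hfilter_append : ∀ A : Finset ℕ,
      (G₁ ++ G₂).filter (fun a => decide (a ∈ A)) =
        G₁.filter (fun a => decide (a ∈ A)) ++ G₂.filter (fun a => decide (a ∈ A)) :=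
    fun A => List.filter_append _ _
  have hempty2 : ∀ A : Finset ℕ, A ⊆ G₁.toFinset →
      G₂.filter (fun a => decide (a ∈ A)) = [] := by
    intro A hA
    rw [List.filter_eq_nil_iff]
    intro a ha
    simp only [decide_eq_true_eq]
    intro haA
    exact hdisj a (List.mem_toFinset.mp (hA haA)) ha
  have hempty1 : ∀ A : Finset ℕ, A ⊆ G₂.toFinset →
      G₁.filter (fun a => decide (a ∈ A)) = [] := by
    intro A hA
    rw [List.filter_eq_nil_iff]
    intro a ha
    simp only [decide_eq_true_eq]
    intro haA
    exact hdisj a ha (List.mem_toFinset.mp (hA haA))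
  have hnotempty : ¬ WordIso ([] : List ℕ) x := by
    intro h
    have := wordIso_length h
    simp only [List.length_nil] at this
    omega
  have gaussfilter : ∀ (G : List ℕ), IsGauss G → ∀ A : Finset ℕ,
      IsGauss (G.filter (fun a => decide (a ∈ A))) := by
    intro G hG A a ha
    rw [List.mem_filter] at ha
    have hc : List.count a (List.filter (fun b => decide (b ∈ A)) G) = List.count a G :=
      List.count_filter ha.2
    exact hc.trans (hG a ha.1)
  have key : ∀ A : Finset ℕ, A ⊆ (G₁ ++ G₂).toFinset →
      WordIso ((G₁ ++ G₂).filter (fun a => decide (a ∈ A))) x →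
      A ⊆ G₁.toFinset ∨ A ⊆ G₂.toFinset := by
    intro A hA hiso
    by_contra hcon
    push_neg at hcon
    obtain ⟨hc1, hc2⟩ := hcon
    rw [Finset.not_subset] at hc1 hc2
    obtain ⟨a2, ha2A, ha2⟩ := hc1
    obtain ⟨a1, ha1A, ha1⟩ := hc2
    have ha1G : a1 ∈ G₁ := by
      have := hA ha1A
      rw [List.mem_toFinset, List.mem_append] at this
      rcases this with h | h
      · exact h
      · exact absurd (List.mem_toFinset.mpr h) ha1
    have ha2G : a2 ∈ G₂ := by
      have := hA ha2A
      rw [List.mem_toFinset, List.mem_append] at this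
      rcases this with h | h
      · exact absurd (List.mem_toFinset.mpr h) ha2
      · exact h
    apply hconn
    refine ⟨G₁.filter (fun a => decide (a ∈ A)), G₂.filter (fun a => decide (a ∈ A)),
      ?_, ?_, gaussfilter G₁ h1 A, gaussfilter G₂ h2 A, ?_, ?_⟩
    · intro h
      have hm : a1 ∈ G₁.filter (fun a => decide (a ∈ A)) := by
        rw [List.mem_filter]
        exact ⟨ha1G, by simpa using ha1A⟩
      rw [h] at hm
      simp at hm
    · intro h
      have hm : a2 ∈ G₂.filter (fun a => decide (a ∈ A)) := by
        rw [List.mem_filter]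
        exact ⟨ha2G, by simpa using ha2A⟩
      rw [h] at hm
      simp at hm
    · intro a ha hb
      rw [List.mem_filter] at ha hb
      exact hdisj a ha.1 hb.1
    · apply wordIso_symm
      rwa [hfilter_append] at hiso
  have hSeq : ((G₁ ++ G₂).toFinset.powerset.filter
      (fun A => WordIso ((G₁ ++ G₂).filter (fun a => decide (a ∈ A))) x))
      = (G₁.toFinset.powerset.filter
          (fun A => WordIso (G₁.filter (fun a => decide (a ∈ A))) x))
        ∪ (G₂.toFinset.powerset.filter
          (fun A => WordIso (G₂.filter (fun a => decide (a ∈ A))) x)) := by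
    ext A
    simp only [Finset.mem_filter, Finset.mem_powerset, Finset.mem_union]
    constructor
    · rintro ⟨hA, hiso⟩
      rcases key A hA hiso with h | h
      · left
        refine ⟨h, ?_⟩
        rwa [hfilter_append, hempty2 A h, List.append_nil] at hiso
      · right
        refine ⟨h, ?_⟩
        rwa [hfilter_append, hempty1 A h, List.nil_append] at hiso
    · rintro (⟨hA, hiso⟩ | ⟨hA, hiso⟩)
      · refine ⟨hA.trans (fun a ha => ?_), ?_⟩
        · rw [List.mem_toFinset] at ha ⊢
          exact List.mem_append_left _ ha
        · rw [hfilter_append, hempty2 A hA, List.append_nil]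
          exact hiso
      · refine ⟨hA.trans (fun a ha => ?_), ?_⟩
        · rw [List.mem_toFinset] at ha ⊢
          exact List.mem_append_right _ ha
        · rw [hfilter_append, hempty1 A hA, List.nil_append]
          exact hiso
  have hdisjS : Disjoint
      (G₁.toFinset.powerset.filter
        (fun A => WordIso (G₁.filter (fun a => decide (a ∈ A))) x))
      (G₂.toFinset.powerset.filter
        (fun A => WordIso (G₂.filter (fun a => decide (a ∈ A))) x)) := by
    rw [Finset.disjoint_left]
    intro A hA1 hA2
    simp only [Finset.mem_filter, Finset.mem_powerset] at hA1 hA2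
    have hAe : A = ∅ := by
      rw [Finset.eq_empty_iff_forall_notMem]
      intro a haA
      exact hdisj a (List.mem_toFinset.mp (hA1.1 haA)) (List.mem_toFinset.mp (hA2.1 haA))
    have heq : G₁.filter (fun a => decide (a ∈ A)) = [] := by
      rw [List.filter_eq_nil_iff]
      intro a _
      simp [hAe]
    rw [heq] at hA1
    exact hnotempty hA1.2
  unfold subCount
  rw [hSeq, Finset.card_union_of_disjoint hdisjS]
end

section
/- Let y₁ = [ijij], y₂ = [ijkijk], y₃ = [ijkikj], and let r'₁ = [ijkikj] + [ijij] − [iijj] − [ijijkk] (interpreting terms as chord diagram classes), r'₂ = [ijkijk] − [ijkikj], r'₃ = 3[ijkikj] − [ijkijk] − 2[ijijkk], r'₄ = [ijijkk] − 2[ijkkji] + [iijjkk], r'₅ = [ijijkk] − [iijjkk]. Then the only integer vector (α₁, α₂, α₃) with α₁ tilde_y₁(r'_j) + α₂ tilde_y₂(r'_j) + α₃ tilde_y₃(r'_j) = 0 for all j = 1,...,5 is (0, 0, 0). -/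
open scoped Classical

/-- Auxiliary: `WordIso` is reflexive. -/
lemma wordIso_refl' (w : List ℕ) : WordIso w w :=
  ⟨id, fun a _ b _ h => h, 0, Or.inl (by simp)⟩

/-- Auxiliary: isomorphic Gauss words have equal lengths. -/
lemma wordIso_len {v w : List ℕ} (h : v.length ≠ w.length) : ¬ WordIso v w := by
  rintro ⟨f, -, t, rfl | rfl⟩ <;> simp at h

lemma nisoE' : ¬ WordIso [1,1,2,2] [1,2,1,2] := by
  rintro ⟨f, hf, t, h | h⟩ <;>
  · rw [← List.rotate_mod] at h
    norm_num at h
    have ht : t % 4 < 4 := by omega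
    interval_cases hm : t % 4 <;> simp [List.rotate] at h <;> omega

lemma nisoA' : ¬ WordIso [1,2,3,1,3,2] [1,2,3,1,2,3] := by
  rintro ⟨f, hf, t, h | h⟩ <;>
  · rw [← List.rotate_mod] at h
    norm_num at h
    have ht : t % 6 < 6 := by omega
    interval_cases hm : t % 6 <;> simp [List.rotate] at h <;> omega

lemma nisoB' : ¬ WordIso [1,2,1,2,3,3] [1,2,3,1,2,3] := by
  rintro ⟨f, hf, t, h | h⟩ <;>
  · rw [← List.rotate_mod] at h
    norm_num at h
    have ht : t % 6 < 6 := by omega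
    interval_cases hm : t % 6 <;> simp [List.rotate] at h <;> omega

lemma nisoC' : ¬ WordIso [1,2,3,1,2,3] [1,2,3,1,3,2] := by
  rintro ⟨f, hf, t, h | h⟩ <;>
  · rw [← List.rotate_mod] at h
    norm_num at h
    have ht : t % 6 < 6 := by omega
    interval_cases hm : t % 6 <;> simp [List.rotate] at h <;> omega

lemma nisoD' : ¬ WordIso [1,2,1,2,3,3] [1,2,3,1,3,2] := by
  rintro ⟨f, hf, t, h | h⟩ <;>
  · rw [← List.rotate_mod] at h
    norm_num at h
    have ht : t % 6 < 6 := by omega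
    interval_cases hm : t % 6 <;> simp [List.rotate] at h <;> omega

/-- with `y₁ = [ijij]`, `y₂ = [ijkijk]`, `y₃ = [ijkikj]` and the five
relators `r'₁, …, r'₅`, the only integer vector `(α₁, α₂, α₃)` with
`α₁ tilde_{y₁}(r'_j) + α₂ tilde_{y₂}(r'_j) + α₃ tilde_{y₃}(r'_j) = 0` for all `j`
is `(0, 0, 0)`. -/
theorem weakRIII_only_trivial_solution (α₁ α₂ α₃ : ℤ)
    (h : ∀ r ∈ [
        [((1 : ℤ), [1, 2, 3, 1, 3, 2]), (1, [1, 2, 1, 2]), (-1, [1, 1, 2, 2]),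
          (-1, [1, 2, 1, 2, 3, 3])],
        [((1 : ℤ), [1, 2, 3, 1, 2, 3]), (-1, [1, 2, 3, 1, 3, 2])],
        [((3 : ℤ), [1, 2, 3, 1, 3, 2]), (-1, [1, 2, 3, 1, 2, 3]),
          (-2, [1, 2, 1, 2, 3, 3])],
        [((1 : ℤ), [1, 2, 1, 2, 3, 3]), (-2, [1, 2, 3, 3, 2, 1]),
          (1, [1, 1, 2, 2, 3, 3])],
        [((1 : ℤ), [1, 2, 1, 2, 3, 3]), (-1, [1, 1, 2, 2, 3, 3])]],
      α₁ * coef [1, 2, 1, 2] r + α₂ * coef [1, 2, 3, 1, 2, 3] r +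
        α₃ * coef [1, 2, 3, 1, 3, 2] r = 0) :
    α₁ = 0 ∧ α₂ = 0 ∧ α₃ = 0 := by
  have h1 := h [((1 : ℤ), [1, 2, 3, 1, 3, 2]), (1, [1, 2, 1, 2]), (-1, [1, 1, 2, 2]),
          (-1, [1, 2, 1, 2, 3, 3])] (by simp)
  have h2 := h [((1 : ℤ), [1, 2, 3, 1, 2, 3]), (-1, [1, 2, 3, 1, 3, 2])] (by simp)
  have h3 := h [((3 : ℤ), [1, 2, 3, 1, 3, 2]), (-1, [1, 2, 3, 1, 2, 3]),
          (-2, [1, 2, 1, 2, 3, 3])] (by simp)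
  simp only [coef, List.map_cons, List.map_nil, List.sum_cons, List.sum_nil,
    wordIso_refl' [1, 2, 1, 2], wordIso_refl' [1, 2, 3, 1, 2, 3],
    wordIso_refl' [1, 2, 3, 1, 3, 2],
    nisoE', nisoA', nisoB', nisoC', nisoD',
    wordIso_len (show ([1,2,3,1,3,2] : List ℕ).length ≠ ([1,2,1,2] : List ℕ).length by norm_num),
    wordIso_len (show ([1,2,3,1,2,3] : List ℕ).length ≠ ([1,2,1,2] : List ℕ).length by norm_num),
    wordIso_len (show ([1,2,1,2,3,3] : List ℕ).length ≠ ([1,2,1,2] : List ℕ).length by norm_num),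
    wordIso_len (show ([1,2,1,2] : List ℕ).length ≠ ([1,2,3,1,2,3] : List ℕ).length by norm_num),
    wordIso_len (show ([1,1,2,2] : List ℕ).length ≠ ([1,2,3,1,2,3] : List ℕ).length by norm_num),
    wordIso_len (show ([1,2,1,2] : List ℕ).length ≠ ([1,2,3,1,3,2] : List ℕ).length by norm_num),
    wordIso_len (show ([1,1,2,2] : List ℕ).length ≠ ([1,2,3,1,3,2] : List ℕ).length by norm_num),
    if_true, if_false, eq_self_iff_true] at h1 h2 h3
  norm_num at h1 h2 h3
  refine ⟨by linarith, by linarith, by linarith⟩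
end
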